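/- The ℓ1 − ℓ2 penalty satisfies condition (R2): for all z_1, …, z_{s+1} > 0, R(z_1,…,z_s,z_{s+1},0,…,0) > R(z_1,…,z_{s-1}, z_s + z_{s+1}, 0,…,0), where R(z) = ‖z‖_1 − ‖z‖_2 on ℝ^N with N ≥ s+1. -/
import Mathlib

theorem l1_minus_l2_satisfies_R2 (N s : ℕ) (hs : 1 ≤ s) (hN : s + 1 ≤ N)
    (z : Fin (s + 1) → ℝ) (hz : ∀ i, 0 < z i)
    (v₁ v₂ : Fin N → ℝ)
    (hv₁ : v₁ = fun (j : Fin N) => if h : (j : ℕ) < s + 1 then z ⟨j, h⟩ else 0)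
    (hv₂ : v₂ = fun (j : Fin N) =>
      if h : (j : ℕ) < s - 1 then z ⟨j, by omega⟩
      else if (j : ℕ) = s - 1 then z ⟨s - 1, by omega⟩ + z ⟨s, by omega⟩
      else 0) :
    (∑ j, |v₂ j|) - Real.sqrt (∑ j, (v₂ j) ^ 2) <
      (∑ j, |v₁ j|) - Real.sqrt (∑ j, (v₁ j) ^ 2) := by
  obtain ⟨t, rfl⟩ : ∃ t, s = t + 1 := ⟨s - 1, by omega⟩
  simp only [Nat.add_sub_cancel] at hv₂
  set Z : ℕ → ℝ := fun i => if h : i < t + 2 then z ⟨i, by omega⟩ else 0 with hZ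
  have hZpos : ∀ i, i < t + 2 → 0 < Z i := by
    intro i hi; simp only [hZ, dif_pos hi]; exact hz _
  have hv₁' : ∀ j : Fin N, v₁ j = Z j := by
    intro j; rw [hv₁, hZ]
  have hv₂' : ∀ j : Fin N, v₂ j =
      if (j : ℕ) < t then Z j
      else if (j : ℕ) = t then Z t + Z (t+1) else 0 := by
    intro j; rw [hv₂, hZ]
    by_cases h1 : (j : ℕ) < t
    · simp [h1, dif_pos (show (j:ℕ) < t + 2 by omega)]
    · by_cases h2 : (j : ℕ) = t
      · simp [h1, h2, dif_pos (show t < t + 2 by omega),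
          dif_pos (show t + 1 < t + 2 by omega)]
      · simp [h1, h2]
  have sum1 : ∀ f : ℝ → ℝ, f 0 = 0 →
      ∑ j : Fin N, f (v₁ j) = ∑ i ∈ Finset.range (t+2), f (Z i) := by
    intro f hf
    rw [show (∑ j : Fin N, f (v₁ j)) = ∑ j : Fin N, f (Z j) from
      Finset.sum_congr rfl fun j _ => by rw [hv₁' j]]
    rw [Fin.sum_univ_eq_sum_range (fun i => f (Z i)) N]
    symm
    apply Finset.sum_subset (Finset.range_subset_range.2 (by omega))
    intro x _ hx
    simp only [Finset.mem_range, not_lt] at hx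
    rw [show Z x = 0 from dif_neg (by omega)]
    exact hf
  have sum2 : ∀ f : ℝ → ℝ, f 0 = 0 →
      ∑ j : Fin N, f (v₂ j) =
        (∑ i ∈ Finset.range t, f (Z i)) + f (Z t + Z (t+1)) := by
    intro f hf
    have e1 : ∑ j : Fin N, f (v₂ j) = ∑ i ∈ Finset.range N,
        f (if i < t then Z i else if i = t then Z t + Z (t+1) else 0) := by
      rw [show (∑ j : Fin N, f (v₂ j)) = ∑ j : Fin N,
        f (if (j:ℕ) < t then Z j else if (j:ℕ) = t then Z t + Z (t+1) else 0) from
        Finset.sum_congr rfl fun j _ => by rw [hv₂' j]]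
      exact Fin.sum_univ_eq_sum_range
        (fun i => f (if i < t then Z i else if i = t then Z t + Z (t+1) else 0)) N
    rw [e1]
    rw [show (∑ i ∈ Finset.range N,
        f (if i < t then Z i else if i = t then Z t + Z (t+1) else 0)) =
        ∑ i ∈ Finset.range (t+1),
        f (if i < t then Z i else if i = t then Z t + Z (t+1) else 0) from by
      symm; apply Finset.sum_subset (Finset.range_subset_range.2 (by omega))
      intro x _ hx
      simp only [Finset.mem_range, not_lt] at hx
      rw [if_neg (by omega), if_neg (by omega)]; exact hf]
    rw [Finset.sum_range_succ, if_neg (lt_irrefl _), if_pos rfl]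
    congr 1
    exact Finset.sum_congr rfl fun x hx => by
      rw [if_pos (Finset.mem_range.1 hx)]
  have habs : (∑ j, |v₂ j|) = ∑ j, |v₁ j| := by
    rw [sum1 (fun x => |x|) abs_zero, sum2 (fun x => |x|) abs_zero]
    rw [Finset.sum_range_succ, Finset.sum_range_succ]
    have ha := hZpos t (by omega)
    have hb := hZpos (t+1) (by omega)
    rw [abs_of_pos ha, abs_of_pos hb, abs_of_pos (by linarith)]
    ring
  have hsq1 : (∑ j, (v₁ j)^2) = (∑ i ∈ Finset.range t, (Z i)^2) + (Z t)^2 + (Z (t+1))^2 := by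
    rw [sum1 (fun x => x^2) (by norm_num), Finset.sum_range_succ, Finset.sum_range_succ]
  have hsq2 : (∑ j, (v₂ j)^2) = (∑ i ∈ Finset.range t, (Z i)^2) + (Z t + Z (t+1))^2 := by
    rw [sum2 (fun x => x^2) (by norm_num)]
  have ha := hZpos t (by omega)
  have hb := hZpos (t+1) (by omega)
  have hT : 0 ≤ ∑ i ∈ Finset.range t, (Z i)^2 :=
    Finset.sum_nonneg fun i _ => sq_nonneg _
  have hlt : (∑ j, (v₁ j)^2) < ∑ j, (v₂ j)^2 := by
    rw [hsq1, hsq2]; nlinarith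
  have hsqrt : Real.sqrt (∑ j, (v₁ j)^2) < Real.sqrt (∑ j, (v₂ j)^2) := by
    apply Real.sqrt_lt_sqrt _ hlt
    rw [hsq1]; nlinarith
  linarith [habs.le, hsqrt]
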